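/- Let G = (V, E) be an m-uniform hyper-tree generated by independent vertices. Then the Laplacian tensor ℒ of G is a symmetric W-tensor. -/

import Mathlib

open MvPolynomial Finset

noncomputable section

/-- `tmul A x = 𝒜 x^m`, the homogeneous form associated with an
`m`-th order `n`-dimensional tensor `A`. -/
def tmul {m n : ℕ} (A : (Fin m → Fin n) → ℝ) (x : Fin n → ℝ) : ℝ :=
  ∑ g : Fin m → Fin n, A g * ∏ j, x (g j)

/-- A tensor is symmetric if its entries are invariant under permutations of the indices. -/
def IsSymT {m n : ℕ} (A : (Fin m → Fin n) → ℝ) : Prop :=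
  ∀ (σ : Equiv.Perm (Fin m)) (g : Fin m → Fin n), A (g ∘ σ) = A g

/-- `lam` is an H-eigenvalue of a tensor of order `m + 1`:
there is a nonzero `x` with `𝒜 x^m = lam * x^{[m]}`. -/
def IsHEig {m n : ℕ} (A : (Fin (m + 1) → Fin n) → ℝ) (lam : ℝ) : Prop :=
  ∃ x : Fin n → ℝ, x ≠ 0 ∧ ∀ i : Fin n,
    (∑ g : Fin m → Fin n, A (Fin.cons i g) * ∏ j, x (g j)) = lam * x i ^ m

/-- `𝒜_Γ x_Γ^m` for a subtensor `B` indexed by an index set `Γ ⊆ {1,…,n}`. -/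
def subTmul {m n : ℕ} (Γ : Finset (Fin n)) (B : (Fin m → Γ) → ℝ) (x : Fin n → ℝ) : ℝ :=
  ∑ g : Fin m → Γ, B g * ∏ j, x (g j).1

/-- An index tuple is off-diagonal if not all of its entries coincide. -/
def NotDiag {m : ℕ} {I : Type*} (g : Fin m → I) : Prop := ¬ ∀ j j' : Fin m, g j = g j'

/-- Condition (iii) in the definition of a W-tensor, for one subtensor. -/
def WCondIII {m n : ℕ} {Γ : Finset (Fin n)} (B : (Fin m → Γ) → ℝ) : Prop :=
  (∃ gb : Fin m → Γ, NotDiag gb ∧ ∀ g : Fin m → Γ, NotDiag g →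
      (∀ σ : Equiv.Perm (Fin m), g ≠ gb ∘ σ) → B g = 0) ∨
  (∀ g : Fin m → Γ, NotDiag g → 0 ≤ B g)

/-- Condition (i) in the definition of a W-tensor. -/
def WCondI {n s : ℕ} (Γ : Fin s → Finset (Fin n)) : Prop :=
  ∀ p : Fin s, 0 < (p : ℕ) →
    (((Finset.univ.filter fun l => l < p).biUnion Γ) ∩ Γ p).card ≤ 1

/-- W-tensor. -/
def IsWTensor {m n : ℕ} (A : (Fin m → Fin n) → ℝ) : Prop :=
  ∃ (s : ℕ) (Γ : Fin s → Finset (Fin n)) (B : ∀ l : Fin s, (Fin m → Γ l) → ℝ),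
    0 < s ∧ s ≤ n ∧
    Function.Injective Γ ∧
    Finset.univ.biUnion Γ = Finset.univ ∧
    WCondI Γ ∧
    (∀ x : Fin n → ℝ, tmul A x = ∑ l, subTmul (Γ l) (B l) x) ∧
    (∀ l, WCondIII (B l))

/-- Sums of squares of polynomials. -/
def IsSOSPoly {σ : Type*} (p : MvPolynomial σ ℝ) : Prop :=
  ∃ (r : ℕ) (q : Fin r → MvPolynomial σ ℝ), p = ∑ j, q j ^ 2

/-- The polynomial `𝒜 x^m` as a formal multivariate polynomial. -/
def tpoly {m n : ℕ} (A : (Fin m → Fin n) → ℝ) : MvPolynomial (Fin n) ℝ :=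
  ∑ g : Fin m → Fin n, MvPolynomial.C (A g) * ∏ j, MvPolynomial.X (g j)

/-- The polynomial `𝒜_Γ x_Γ^m` of a subtensor, in the variables `x_Γ`. -/
def subTpoly {m n : ℕ} (Γ : Finset (Fin n)) (B : (Fin m → Γ) → ℝ) : MvPolynomial Γ ℝ :=
  ∑ g : Fin m → Γ, MvPolynomial.C (B g) * ∏ j, MvPolynomial.X (g j)

/-- A (symmetric) tensor is copositive if `𝒜 x^m ≥ 0` for all entrywise-nonnegative `x`. -/
def Copositive {m n : ℕ} (A : (Fin m → Fin n) → ℝ) : Prop :=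
  ∀ x : Fin n → ℝ, (∀ i, 0 ≤ x i) → 0 ≤ tmul A x


/-- The adjacency tensor of an `m`-uniform hypergraph with edge set `E`:
entry `1/(m−1)!` at tuples whose underlying vertex set is an edge, `0` otherwise. -/
def adjT (m n : ℕ) (E : Finset (Finset (Fin n))) : (Fin m → Fin n) → ℝ :=
  fun g => if Finset.image g Finset.univ ∈ E then 1 / (Nat.factorial (m - 1) : ℝ) else 0

/-- The degree of a vertex: the number of edges containing it. -/
def degT {n : ℕ} (E : Finset (Finset (Fin n))) (i : Fin n) : ℕ :=
  (E.filter fun e => i ∈ e).card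

/-- The Laplacian tensor `ℒ = 𝒟 − 𝒜` of a hypergraph. -/
def lapT (m n : ℕ) (E : Finset (Finset (Fin n))) : (Fin m → Fin n) → ℝ :=
  fun g => (∑ i : Fin n, if g = Function.const (Fin m) i then (degT E i : ℝ) else 0)
    - adjT m n E g

set_option maxHeartbeats 1000000 in
section
namespace Thm42Aux
set_option linter.unusedSectionVars false
set_option linter.unusedVariables false

variable {W : Type*} [DecidableEq W]

def ends (e : Sym2 W) : Finset W :=
  Sym2.lift ⟨fun a b => {a, b}, fun a b => Finset.pair_comm a b⟩ e

@[simp] lemma ends_mk (a b : W) : ends s(a, b) = {a, b} := rfl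


lemma ends_card {e : Sym2 W} (h : ¬ e.IsDiag) : (ends e).card = 2 := by
  induction e using Sym2.ind with
  | _ a b =>
    rw [Sym2.mk_isDiag_iff] at h
    simp [ends_mk, Finset.card_insert_of_notMem, h]

lemma ends_injective : Function.Injective (ends (W := W)) := by
  intro e e' h
  induction e using Sym2.ind with
  | _ a b =>
    induction e' using Sym2.ind with
    | _ c d =>
      simp only [ends_mk] at h
      have ha : a = c ∨ a = d := by
        have : a ∈ ({c, d} : Finset W) := h ▸ (by simp)
        simpa using this
      have hb : b = c ∨ b = d := by
        have : b ∈ ({c, d} : Finset W) := h ▸ (by simp)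
        simpa using this
      have hc : c = a ∨ c = b := by
        have : c ∈ ({a, b} : Finset W) := h ▸ (by simp)
        simpa [← h] using this
      have hd : d = a ∨ d = b := by
        have : d ∈ ({a, b} : Finset W) := h ▸ (by simp)
        simpa [← h] using this
      rcases ha with rfl | rfl <;> rcases hb with rfl | rfl <;>
        simp_all [Sym2.eq_iff]

def vset (S : Finset (Sym2 W)) : Finset W := S.biUnion ends

lemma ends_subset_vset {S : Finset (Sym2 W)} {e : Sym2 W} (he : e ∈ S) :
    ends e ⊆ vset S := fun a ha => Finset.mem_biUnion.2 ⟨e, he, ha⟩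

lemma vset_nonempty {S : Finset (Sym2 W)} (hS : S.Nonempty) : (vset S).Nonempty := by
  obtain ⟨e, he⟩ := hS
  induction e using Sym2.ind with
  | _ a b => exact ⟨a, ends_subset_vset he (by simp)⟩

variable [Fintype W] {G : SimpleGraph W}

lemma tree_greedy (hG : G.IsTree) [DecidableRel G.Adj] [Fintype G.edgeSet]
    (S : Finset (Sym2 W)) (hS : S ⊆ G.edgeFinset) (hne : S ≠ G.edgeFinset)
    (hinv : ∀ u ∈ vset S, ∀ v ∈ vset S, (SimpleGraph.fromEdgeSet (↑S : Set (Sym2 W))).Reachable u v) :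
    ∃ e ∈ G.edgeFinset, e ∉ S ∧ (ends e ∩ vset S).card ≤ 1 ∧
      (S.Nonempty → (ends e ∩ vset S).Nonempty) := by
  have hdiff : (G.edgeFinset \ S).Nonempty := by
    rw [Finset.sdiff_nonempty]
    exact fun h => hne (Finset.Subset.antisymm hS h)
  -- every unprocessed edge has at most one endpoint in vset S
  have hle1 : ∀ e ∈ G.edgeFinset, e ∉ S → (ends e ∩ vset S).card ≤ 1 := by
    intro e he heS
    induction e using Sym2.ind with
    | _ a b =>
      have hadj : G.Adj a b := by
        rw [SimpleGraph.mem_edgeFinset, SimpleGraph.mem_edgeSet] at he; exact he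
      have hab : a ≠ b := hadj.ne
      by_contra hcard
      push_neg at hcard
      have hsub : ends s(a, b) ∩ vset S ⊆ {a, b} := by
        exact (Finset.inter_subset_left).trans (by simp)
      have hboth : a ∈ vset S ∧ b ∈ vset S := by
        by_contra hno
        have hsub2 : ends s(a, b) ∩ vset S ⊆ {a} ∨ ends s(a,b) ∩ vset S ⊆ {b} := by
          rcases not_and_or.1 hno with h | h
          · right; intro x hx
            simp only [ends_mk, Finset.mem_inter, Finset.mem_insert, Finset.mem_singleton] at hx
            rcases hx.1 with rfl | rfl
            · exact absurd hx.2 h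
            · simp
          · left; intro x hx
            simp only [ends_mk, Finset.mem_inter, Finset.mem_insert, Finset.mem_singleton] at hx
            rcases hx.1 with rfl | rfl
            · simp
            · exact absurd hx.2 h
        rcases hsub2 with h | h <;>
        · have h2 := Finset.card_le_card h
          simp only [Finset.card_singleton] at h2
          omega
      -- path from a to b inside S
      obtain ⟨w⟩ := hinv a hboth.1 b hboth.2
      have hle : SimpleGraph.fromEdgeSet (↑S : Set (Sym2 W)) ≤ G := by
        refine SimpleGraph.edgeSet_subset_edgeSet.1 ?_
        rw [SimpleGraph.edgeSet_fromEdgeSet]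
        intro e he
        exact SimpleGraph.mem_edgeFinset.1 (hS he.1)
      let p := w.bypass
      have hp : p.IsPath := SimpleGraph.Walk.bypass_isPath w
      let p' : G.Walk a b := p.mapLe hle
      have hp' : p'.IsPath := hp.mapLe hle
      let q : G.Walk a b := SimpleGraph.Walk.cons hadj SimpleGraph.Walk.nil
      have hq : q.IsPath := by simp [q, hab]
      have hpq : p' = q := by
        obtain ⟨r, -, hr⟩ := hG.existsUnique_path a b
        rw [hr p' hp', hr q hq]
      have hmem : s(a, b) ∈ p'.edges := by
        rw [hpq]; simp [q]
      have : s(a, b) ∈ (SimpleGraph.fromEdgeSet (↑S : Set (Sym2 W))).edgeSet := by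
        have := p.edges_subset_edgeSet
        have hid : Sym2.map ⇑(SimpleGraph.Hom.ofLE hle) = id := by
          funext e
          induction e using Sym2.ind with
          | _ a b => simp [SimpleGraph.Hom.ofLE_apply]
        have hed : p'.edges = p.edges := by
          show (p.map _).edges = p.edges
          rw [SimpleGraph.Walk.edges_map, hid, List.map_id]
        exact p.edges_subset_edgeSet (hed ▸ hmem)
      rw [SimpleGraph.edgeSet_fromEdgeSet] at this
      exact heS this.1
  obtain ⟨e0, he0⟩ := hdiff
  rw [Finset.mem_sdiff] at he0
  rcases Finset.eq_empty_or_nonempty S with rfl | hSne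
  · exact ⟨e0, he0.1, he0.2, by simp [vset], by simp⟩
  induction e0 using Sym2.ind with
  | _ a b =>
    by_cases hme : a ∈ vset S ∨ b ∈ vset S
    · refine ⟨s(a, b), he0.1, he0.2, hle1 _ he0.1 he0.2, fun _ => ?_⟩
      rcases hme with h | h
      · exact ⟨a, Finset.mem_inter.2 ⟨by simp, h⟩⟩
      · exact ⟨b, Finset.mem_inter.2 ⟨by simp, h⟩⟩
    · push_neg at hme
      obtain ⟨u, hu⟩ := vset_nonempty hSne
      obtain ⟨w⟩ := hG.isConnected.preconnected u a
      obtain ⟨d, hd, hdS⟩ := w.exists_boundary_dart (↑(vset S) : Set W) hu hme.1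
      obtain ⟨⟨x, y⟩, hxy⟩ := d
      simp only at hdS
      have hadj : G.Adj x y := hxy
      have heE : s(x, y) ∈ G.edgeFinset := by
        rw [SimpleGraph.mem_edgeFinset, SimpleGraph.mem_edgeSet]; exact hadj
      have heS : s(x, y) ∉ S := by
        intro h
        exact hdS.2 (ends_subset_vset h (by simp))
      exact ⟨s(x, y), heE, heS, hle1 _ heE heS,
        fun _ => ⟨x, Finset.mem_inter.2 ⟨by simp, hdS.1⟩⟩⟩


@[simp] lemma vset_empty : vset (∅ : Finset (Sym2 W)) = ∅ := rfl

lemma tree_build (hG : G.IsTree) [DecidableRel G.Adj] [Fintype G.edgeSet] :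
    ∀ (k : ℕ) (S : Finset (Sym2 W)), S ⊆ G.edgeFinset → (G.edgeFinset \ S).card = k →
      (∀ u ∈ vset S, ∀ v ∈ vset S, (SimpleGraph.fromEdgeSet (↑S : Set (Sym2 W))).Reachable u v) →
      ∃ L : List (Sym2 W), L.Nodup ∧ (∀ e ∈ L, e ∉ S) ∧ S ∪ L.toFinset = G.edgeFinset ∧
        ∀ (p : ℕ) (hp : p < L.length),
          (ends (L.get ⟨p, hp⟩) ∩ (vset S ∪ vset (L.take p).toFinset)).card ≤ 1 := by
  intro k
  induction k with
  | zero =>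
    intro S hS hcard _
    refine ⟨[], by simp, by simp, ?_, by simp⟩
    have h0 : G.edgeFinset \ S = ∅ := Finset.card_eq_zero.1 hcard
    have h2 : G.edgeFinset ⊆ S := by rwa [Finset.sdiff_eq_empty_iff_subset] at h0
    simp [Finset.Subset.antisymm hS h2]
  | succ k ih =>
    intro S hS hcard hinv
    have hne : S ≠ G.edgeFinset := by
      intro h; rw [h] at hcard; simp at hcard
    obtain ⟨e, heE, heS, hle, htouch⟩ := tree_greedy hG S hS hne hinv
    set S' := insert e S with hS'def
    have hS'sub : S' ⊆ G.edgeFinset := Finset.insert_subset heE hS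
    have hcard' : (G.edgeFinset \ S').card = k := by
      have : G.edgeFinset \ S' = (G.edgeFinset \ S).erase e := by
        ext f
        simp only [hS'def, Finset.mem_sdiff, Finset.mem_insert, Finset.mem_erase]
        tauto
      rw [this, Finset.card_erase_of_mem (by simp [Finset.mem_sdiff, heE, heS]), hcard]
      omega
    have hvs' : vset S' = ends e ∪ vset S := Finset.biUnion_insert
    have hmono : SimpleGraph.fromEdgeSet (↑S : Set (Sym2 W)) ≤
        SimpleGraph.fromEdgeSet (↑S' : Set (Sym2 W)) := by
      apply SimpleGraph.fromEdgeSet_mono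
      simp [hS'def, Finset.subset_insert]
    have hinv' : ∀ u ∈ vset S', ∀ v ∈ vset S',
        (SimpleGraph.fromEdgeSet (↑S' : Set (Sym2 W))).Reachable u v := by
      have hend : ∀ u ∈ ends e, ∀ v ∈ ends e,
          (SimpleGraph.fromEdgeSet (↑S' : Set (Sym2 W))).Reachable u v := by
        induction e using Sym2.ind with
        | _ a b =>
          have hab : a ≠ b := by
            have := SimpleGraph.not_isDiag_of_mem_edgeSet G (SimpleGraph.mem_edgeFinset.1 heE)
            rwa [Sym2.mk_isDiag_iff] at this
          intro u hu v hv
          simp only [ends_mk, Finset.mem_insert, Finset.mem_singleton] at hu hv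
          have hadj : ∀ x y : W, x ≠ y → s(x, y) = s(a, b) →
              (SimpleGraph.fromEdgeSet (↑S' : Set (Sym2 W))).Adj x y := by
            intro x y hxy hmk
            rw [SimpleGraph.fromEdgeSet_adj]
            exact ⟨by simp [hmk, hS'def], hxy⟩
          rcases hu with rfl | rfl <;> rcases hv with rfl | rfl
          · rfl
          · exact (hadj u v hab rfl).reachable
          · exact (hadj u v hab.symm (Sym2.eq_swap)).reachable
          · rfl
      have hold : ∀ u ∈ vset S, ∀ v ∈ vset S,
          (SimpleGraph.fromEdgeSet (↑S' : Set (Sym2 W))).Reachable u v :=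
        fun u hu v hv => (hinv u hu v hv).mono hmono
      have hmix : ∀ u ∈ ends e, ∀ v ∈ vset S,
          (SimpleGraph.fromEdgeSet (↑S' : Set (Sym2 W))).Reachable u v := by
        intro u hu v hv
        have hSne : S.Nonempty := by
          rcases Finset.eq_empty_or_nonempty S with rfl | h
          · simp [vset] at hv
          · exact h
        obtain ⟨c, hc⟩ := htouch hSne
        rw [Finset.mem_inter] at hc
        exact (hend u hu c hc.1).trans (hold c hc.2 v hv)
      intro u hu v hv
      rw [hvs', Finset.mem_union] at hu hv
      rcases hu with hu | hu <;> rcases hv with hv | hv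
      · exact hend u hu v hv
      · exact hmix u hu v hv
      · exact (hmix v hv u hu).symm
      · exact hold u hu v hv
    obtain ⟨L, hnd, hnotin, hunion, hgood⟩ := ih S' hS'sub hcard' hinv'
    refine ⟨e :: L, ?_, ?_, ?_, ?_⟩
    · refine List.nodup_cons.2 ⟨fun h => ?_, hnd⟩
      exact hnotin e h (by simp [hS'def])
    · intro f hf
      rcases List.mem_cons.1 hf with rfl | hf
      · exact heS
      · exact fun h => hnotin f hf (by simp [hS'def, h])
    · rw [← hunion]
      ext f
      simp only [List.toFinset_cons, Finset.mem_union, Finset.mem_insert, hS'def]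
      tauto
    · intro p hp
      match p with
      | 0 =>
        simp only [List.get, List.take_zero, List.toFinset_nil, vset_empty,
          Finset.union_empty]
        exact hle
      | Nat.succ q =>
        have hq : q < L.length := by simpa using hp
        have hset : vset S ∪ vset ((e :: L).take (q + 1)).toFinset =
            vset S' ∪ vset ((L.take q).toFinset) := by
          ext w
          simp only [List.take_succ_cons, List.toFinset_cons, vset, Finset.mem_union,
            Finset.mem_biUnion, Finset.mem_insert, hS'def]
          constructor
          · rintro (⟨f, hf, hw⟩ | ⟨f, hf, hw⟩)
            · exact Or.inl ⟨f, Or.inr hf, hw⟩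
            · rcases hf with rfl | hf
              · exact Or.inl ⟨f, Or.inl rfl, hw⟩
              · exact Or.inr ⟨f, hf, hw⟩
          · rintro (⟨f, hf, hw⟩ | ⟨f, hf, hw⟩)
            · rcases hf with rfl | hf
              · exact Or.inr ⟨f, Or.inl rfl, hw⟩
              · exact Or.inl ⟨f, hf, hw⟩
            · exact Or.inr ⟨f, Or.inr hf, hw⟩
        have hmain := hgood q hq
        have hgeteq : (e :: L).get ⟨q + 1, hp⟩ = L.get ⟨q, hq⟩ := rfl
        rw [hgeteq, hset]
        exact hmain
  

lemma tree_order (hG : G.IsTree) [DecidableRel G.Adj] [Fintype G.edgeSet] :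
    ∃ L : List (Sym2 W), L.Nodup ∧ L.toFinset = G.edgeFinset ∧
      ∀ (p : ℕ) (hp : p < L.length),
        (ends (L.get ⟨p, hp⟩) ∩ vset (L.take p).toFinset).card ≤ 1 := by
  obtain ⟨L, h1, _, h3, h4⟩ := tree_build hG (G.edgeFinset \ ∅).card ∅ (by simp) rfl
    (by simp [vset])
  refine ⟨L, h1, by simpa using h3, fun p hp => ?_⟩
  simpa using h4 p hp



lemma sum_const_tuple {m : ℕ} {I : Type*} [Fintype I] [DecidableEq I]
    (d : I → ℝ) (t : (Fin m → I) → ℝ) :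
    ∑ g : Fin m → I, (∑ i, if g = Function.const (Fin m) i then d i else 0) * t g
      = ∑ i, d i * t (Function.const (Fin m) i) := by
  have h1 : ∀ g : Fin m → I,
      (∑ i, if g = Function.const (Fin m) i then d i else 0) * t g
        = ∑ i, (if g = Function.const (Fin m) i then d i * t g else 0) := by
    intro g
    rw [Finset.sum_mul]
    exact Finset.sum_congr rfl fun i _ => by rw [ite_mul, zero_mul]
  rw [Finset.sum_congr rfl fun g _ => h1 g, Finset.sum_comm]
  refine Finset.sum_congr rfl fun i _ => ?_
  rw [Finset.sum_ite_eq' Finset.univ (Function.const (Fin m) i)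
    (fun g => d i * t g), if_pos (Finset.mem_univ _)]

lemma indicator_const_sum {m : ℕ} (hm : 0 < m) {I : Type*} [Fintype I] [DecidableEq I]
    (t : (Fin m → I) → ℝ) :
    ∑ g : Fin m → I, (if ∃ i : I, g = Function.const (Fin m) i then (1:ℝ) else 0) * t g
      = ∑ i : I, t (Function.const (Fin m) i) := by
  have key : ∀ g : Fin m → I,
      (if ∃ i : I, g = Function.const (Fin m) i then (1:ℝ) else 0)
        = ∑ i : I, if g = Function.const (Fin m) i then (1:ℝ) else 0 := by
    intro g
    by_cases h : ∃ i : I, g = Function.const (Fin m) i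
    · obtain ⟨i0, rfl⟩ := h
      rw [if_pos ⟨i0, rfl⟩, Finset.sum_eq_single i0]
      · simp
      · intro j _ hj
        rw [if_neg]
        intro hc
        exact hj (congrFun hc ⟨0, hm⟩).symm
      · simp
    · rw [if_neg h, eq_comm]
      refine Finset.sum_eq_zero fun i _ => if_neg fun hc => h ⟨i, hc⟩
  rw [Finset.sum_congr rfl fun g _ => by rw [key g]]
  exact sum_const_tuple (fun _ => (1:ℝ)) t |>.trans (by simp)


lemma sum_adj_fiber {m n : ℕ} [DecidableEq (Fin n)] (E : Finset (Finset (Fin n))) (c : ℝ)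
    (t : (Fin m → Fin n) → ℝ) :
    ∑ g : Fin m → Fin n, (if Finset.image g Finset.univ ∈ E then c else 0) * t g
      = ∑ e ∈ E, c * ∑ g ∈ Finset.univ.filter
          (fun g : Fin m → Fin n => Finset.image g Finset.univ = e), t g := by
  have h1 : ∑ g : Fin m → Fin n, (if Finset.image g Finset.univ ∈ E then c else 0) * t g
      = ∑ g ∈ Finset.univ.filter
          (fun g : Fin m → Fin n => Finset.image g Finset.univ ∈ E), c * t g := by
    rw [Finset.sum_filter]
    exact Finset.sum_congr rfl fun g _ => by rw [ite_mul, zero_mul]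
  rw [h1, ← Finset.sum_fiberwise_of_maps_to
    (g := fun g : Fin m → Fin n => Finset.image g Finset.univ) (t := E)
    (fun g hg => (Finset.mem_filter.1 hg).2)]
  refine Finset.sum_congr rfl fun e he => ?_
  rw [Finset.mul_sum]
  refine Finset.sum_congr ?_ fun g _ => rfl
  ext g
  simp only [Finset.mem_filter, Finset.mem_univ, true_and]
  exact ⟨fun h => h.2, fun h => ⟨h ▸ he, h⟩⟩

lemma sum_fiber_reindex {m n : ℕ} (Γ0 : Finset (Fin n)) (x : Fin n → ℝ) :
    ∑ g ∈ Finset.univ.filter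
        (fun g : Fin m → Fin n => Finset.image g Finset.univ = Γ0), ∏ j, x (g j)
      = ∑ g ∈ Finset.univ.filter
          (fun g : Fin m → Γ0 =>
            Finset.image (fun j => ((g j : Fin n))) Finset.univ = Γ0), ∏ j, x (g j : Fin n) := by
  refine Finset.sum_bij' (fun g hg => fun j => (⟨g j, by
      have := (Finset.mem_filter.1 hg).2
      rw [← this]
      exact Finset.mem_image_of_mem g (Finset.mem_univ j)⟩ : Γ0))
    (fun g' _ => fun j => (g' j : Fin n)) ?_ ?_ ?_ ?_ ?_
  · intro g hg
    rw [Finset.mem_filter]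
    exact ⟨Finset.mem_univ _, (Finset.mem_filter.1 hg).2⟩
  · intro g' hg'
    rw [Finset.mem_filter]
    exact ⟨Finset.mem_univ _, (Finset.mem_filter.1 hg').2⟩
  · intro g hg
    rfl
  · intro g' hg'
    funext j
    rfl
  · intro g hg
    rfl


def hyper {n m : ℕ} {V0 : Finset (Fin n)} (ι : Sym2 ↥V0 → Fin (m - 2) → Fin n)
    (e : Sym2 ↥V0) : Finset (Fin n) :=
  (ends e).image Subtype.val ∪ Finset.image (ι e) Finset.univ

end Thm42Aux
end

/-- Theorem 4.2: the Laplacian tensor of an `m`-uniform hyper-tree generated by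
independent vertices (built from a tree `T` on `V₀` by enlarging each tree edge `e`
with `m − 2` fresh pairwise-distinct vertices `ι e j`) is a symmetric W-tensor. -/
theorem theorem42 (m n : ℕ) (hm : 2 ≤ m)
    (E : Finset (Finset (Fin n)))
    (V0 : Finset (Fin n)) (T : SimpleGraph ↥V0) (hT : T.IsTree)
    (ι : Sym2 ↥V0 → Fin (m - 2) → Fin n)
    (hnew : ∀ e ∈ T.edgeSet, ∀ j, ι e j ∉ V0)
    (hdistinct : ∀ e ∈ T.edgeSet, ∀ e' ∈ T.edgeSet, ∀ j j',
      ι e j = ι e' j' → e = e' ∧ j = j')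
    (hcover : ∀ v : Fin n, v ∈ V0 ∨ ∃ e ∈ T.edgeSet, ∃ j, ι e j = v)
    (hE : ∀ f : Finset (Fin n), f ∈ E ↔ ∃ a b : ↥V0, T.Adj a b ∧
        f = insert (a : Fin n) (insert (b : Fin n)
          (Finset.image (ι s(a, b)) Finset.univ))) :
    IsSymT (lapT m n E) ∧ IsWTensor (lapT m n E) := by
  classical
  have hm0 : 0 < m := by omega
  -- symmetry
  have hsym : IsSymT (lapT m n E) := by
    intro σ g
    unfold lapT adjT
    have himg : Finset.image (g ∘ σ) Finset.univ = Finset.image g Finset.univ := by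
      rw [← Finset.image_image]
      congr 1
      ext i
      simp only [Finset.mem_image, Finset.mem_univ, true_and, iff_true]
      exact ⟨σ.symm i, σ.apply_symm_apply i⟩
    have hconst : ∀ i : Fin n,
        (g ∘ σ = Function.const (Fin m) i) ↔ (g = Function.const (Fin m) i) := by
      intro i
      constructor
      · intro h
        funext j
        have := congrFun h (σ.symm j)
        simpa using this
      · intro h
        funext j
        exact congrFun h (σ j)
    rw [himg]
    congr 1
    exact Finset.sum_congr rfl fun i _ => if_congr (hconst i) rfl rfl
  refine ⟨hsym, ?_⟩
  have hV0ne : V0.Nonempty := by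
    obtain ⟨⟨v, hv⟩⟩ := hT.isConnected.nonempty
    exact ⟨v, hv⟩
  have hn : 0 < n := hV0ne.elim fun v _ => v.pos
  by_cases hE0 : E = ∅
  · -- degenerate case : no edges, Laplacian is zero
    have hlz : ∀ g : Fin m → Fin n, lapT m n E g = 0 := by
      intro g
      unfold lapT adjT degT
      subst hE0
      simp
    refine ⟨1, fun _ => Finset.univ, fun _ _ => 0, one_pos, hn,
      fun a b _ => Subsingleton.elim a b, ?_, ?_, ?_, ?_⟩
    · ext v
      simp only [Finset.mem_biUnion, Finset.mem_univ, iff_true]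
      refine ⟨0, ?_, ?_⟩ <;> simp
    · intro p hp
      have : (p : ℕ) = 0 := by omega
      omega
    · intro x
      unfold tmul subTmul
      simp [hlz]
    · intro l
      right
      intro g _
      exact le_refl 0
  · -- main case
    haveI : Fintype T.edgeSet := Fintype.ofFinite _
    obtain ⟨L, hLnd, hLfin, hLgood⟩ := Thm42Aux.tree_order hT
    set k := L.length with hkdef
    set hyp : Sym2 ↥V0 → Finset (Fin n) := Thm42Aux.hyper ι with hypdef
    have hedgeSet : ∀ e ∈ T.edgeFinset, e ∈ T.edgeSet := fun e he =>
      SimpleGraph.mem_edgeFinset.1 he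
    -- basic facts about hyperedges
    have hmemhyp : ∀ (e : Sym2 ↥V0) (v : Fin n),
        v ∈ hyp e ↔ (∃ w ∈ Thm42Aux.ends e, (w : Fin n) = v) ∨ ∃ j, ι e j = v := by
      intro e v
      simp [hypdef, Thm42Aux.hyper, Finset.mem_union, Finset.mem_image]
    have hiotainj : ∀ e ∈ T.edgeFinset, Function.Injective (ι e) := by
      intro e he j j' h
      exact (hdistinct e (hedgeSet e he) e (hedgeSet e he) j j' h).2
    have hendsne : ∀ e ∈ T.edgeFinset, ¬ e.IsDiag := fun e he =>
      SimpleGraph.not_isDiag_of_mem_edgeSet T (hedgeSet e he)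
    have hcardhyp : ∀ e ∈ T.edgeFinset, (hyp e).card = m := by
      intro e he
      have hdisj : Disjoint ((Thm42Aux.ends e).image Subtype.val)
          (Finset.image (ι e) Finset.univ) := by
        rw [Finset.disjoint_left]
        rintro v hv hv'
        obtain ⟨w, _, rfl⟩ := Finset.mem_image.1 hv
        obtain ⟨j, _, hj⟩ := Finset.mem_image.1 hv'
        exact hnew e (hedgeSet e he) j (hj ▸ w.2)
      have h1 : ((Thm42Aux.ends e).image Subtype.val).card = 2 := by
        rw [Finset.card_image_of_injective _ Subtype.val_injective,
          Thm42Aux.ends_card (hendsne e he)]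
      have h2 : (Finset.image (ι e) Finset.univ).card = m - 2 := by
        rw [Finset.card_image_of_injective _ (hiotainj e he), Finset.card_univ,
          Fintype.card_fin]
      show ((Thm42Aux.ends e).image Subtype.val ∪ Finset.image (ι e) Finset.univ).card = m
      rw [Finset.card_union_of_disjoint hdisj, h1, h2]
      omega
    have hyp_mk : ∀ a b : ↥V0, hyp s(a, b)
        = insert (a : Fin n) (insert (b : Fin n)
            (Finset.image (ι s(a, b)) Finset.univ)) := by
      intro a b
      simp only [hypdef, Thm42Aux.hyper, Thm42Aux.ends_mk]
      ext v
      simp only [Finset.mem_union, Finset.mem_image, Finset.mem_insert,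
        Finset.mem_singleton, Finset.mem_univ, true_and]
      constructor
      · rintro (⟨w, hw, rfl⟩ | ⟨j, rfl⟩)
        · rcases hw with rfl | rfl
          · exact Or.inl rfl
          · exact Or.inr (Or.inl rfl)
        · exact Or.inr (Or.inr ⟨j, rfl⟩)
      · rintro (rfl | rfl | ⟨j, rfl⟩)
        · exact Or.inl ⟨a, Or.inl rfl, rfl⟩
        · exact Or.inl ⟨b, Or.inr rfl, rfl⟩
        · exact Or.inr ⟨j, rfl⟩
    -- E is the image of the tree's edges
    have hEimg : E = T.edgeFinset.image hyp := by
      ext f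
      rw [hE, Finset.mem_image]
      constructor
      · rintro ⟨a, b, hadj, rfl⟩
        exact ⟨s(a, b), by rwa [SimpleGraph.mem_edgeFinset, SimpleGraph.mem_edgeSet],
          hyp_mk a b⟩
      · rintro ⟨e, he, rfl⟩
        induction e using Sym2.ind with
        | _ a b => exact ⟨a, b, (SimpleGraph.mem_edgeSet T).1 (hedgeSet _ he), hyp_mk a b⟩
    -- injectivity of hyp on the edge set
    have hinjOn : ∀ e ∈ T.edgeFinset, ∀ e' ∈ T.edgeFinset, hyp e = hyp e' → e = e' := by
      intro e he e' he' h
      apply Thm42Aux.ends_injective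
      ext w
      constructor
      · intro hw
        have : (w : Fin n) ∈ hyp e' := by
          rw [← h, hmemhyp]
          exact Or.inl ⟨w, hw, rfl⟩
        rcases (hmemhyp e' _).1 this with ⟨w', hw', hww⟩ | ⟨j, hj⟩
        · exact Subtype.ext hww ▸ hw'
        · exact absurd (hj ▸ w.2) (hnew e' (hedgeSet e' he') j)
      · intro hw
        have : (w : Fin n) ∈ hyp e := by
          rw [h, hmemhyp]
          exact Or.inl ⟨w, hw, rfl⟩
        rcases (hmemhyp e _).1 this with ⟨w', hw', hww⟩ | ⟨j, hj⟩
        · exact Subtype.ext hww ▸ hw'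
        · exact absurd (hj ▸ w.2) (hnew e (hedgeSet e he) j)
    -- pairwise intersections
    have hpair : ∀ e ∈ T.edgeFinset, ∀ e' ∈ T.edgeFinset, e ≠ e' →
        hyp e ∩ hyp e' ⊆ (Thm42Aux.ends e ∩ Thm42Aux.ends e').image Subtype.val := by
      intro e he e' he' hne v hv
      rw [Finset.mem_inter] at hv
      rcases (hmemhyp e v).1 hv.1 with ⟨w, hw, rfl⟩ | ⟨j, hj⟩
      · rcases (hmemhyp e' _).1 hv.2 with ⟨w', hw', hww⟩ | ⟨j, hj⟩
        · exact Finset.mem_image.2 ⟨w, Finset.mem_inter.2 ⟨hw, Subtype.ext hww ▸ hw'⟩, rfl⟩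
        · exact absurd (hj ▸ w.2) (hnew e' (hedgeSet e' he') j)
      · rcases (hmemhyp e' v).1 hv.2 with ⟨w', hw', hww⟩ | ⟨j', hj'⟩
        · exact absurd (hww ▸ w'.2) (by rw [← hj]; exact hnew e (hedgeSet e he) j)
        · exact absurd (hdistinct e (hedgeSet e he) e' (hedgeSet e' he') j j'
            (hj.trans hj'.symm)).1 hne
    have hgetmem : ∀ l : Fin k, L.get l ∈ T.edgeFinset := by
      intro l
      rw [← hLfin]
      exact List.mem_toFinset.2 (L.get_mem l)
    have hEfne : T.edgeFinset.Nonempty := by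
      rcases Finset.eq_empty_or_nonempty T.edgeFinset with h | h
      · exact absurd (by rw [hEimg, h, Finset.image_empty]) hE0
      · exact h
    have hkE : 0 < k ∧ k ≤ n := by
      have hcardeq : k = T.edgeFinset.card := by
        rw [← hLfin, List.toFinset_card_of_nodup hLnd]
      have h1 : 0 < T.edgeFinset.card := Finset.card_pos.2 hEfne
      have h2 : T.edgeFinset.card + 1 = Fintype.card ↥V0 := hT.card_edgeFinset
      have h3 : Fintype.card ↥V0 = V0.card := Fintype.card_coe V0
      have h4 : V0.card ≤ n := by simpa using Finset.card_le_univ V0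
      omega
    refine ⟨k, fun l => hyp (L.get l),
      fun l g => (if ∃ i : ↥(hyp (L.get l)), g = Function.const (Fin m) i then (1:ℝ) else 0)
        - (if Finset.image (fun j => ((g j : Fin n))) Finset.univ = hyp (L.get l)
            then 1 / (Nat.factorial (m - 1) : ℝ) else 0),
      hkE.1, hkE.2, ?_, ?_, ?_, ?_, ?_⟩
    · -- injectivity
      intro l l' h
      exact List.nodup_iff_injective_get.1 hLnd (hinjOn _ (hgetmem l) _ (hgetmem l') h)
    · -- covering
      ext v
      simp only [Finset.mem_biUnion, Finset.mem_univ, iff_true, true_and]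
      have key : ∀ e ∈ T.edgeFinset, v ∈ hyp e →
          ∃ l : Fin k, v ∈ hyp (L.get l) := by
        intro e he hv
        obtain ⟨l, hl⟩ := List.mem_iff_get.1 (List.mem_toFinset.1 (hLfin ▸ he))
        exact ⟨l, hl ▸ hv⟩
      rcases hcover v with hv | ⟨e, he, j, hj⟩
      · have hnb : ∃ u, T.Adj ⟨v, hv⟩ u := by
          obtain ⟨e0, he0⟩ := hEfne
          induction e0 using Sym2.ind with
          | _ a b =>
            have hadj : T.Adj a b := (SimpleGraph.mem_edgeSet T).1 (hedgeSet _ he0)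
            by_cases hwa : (⟨v, hv⟩ : ↥V0) = a
            · exact ⟨b, hwa ▸ hadj⟩
            · obtain ⟨p⟩ := hT.isConnected.preconnected ⟨v, hv⟩ a
              obtain ⟨u, hadj', _, _⟩ := SimpleGraph.Walk.exists_eq_cons_of_ne hwa p
              exact ⟨u, hadj'⟩
        obtain ⟨u, hadj⟩ := hnb
        refine key s(⟨v, hv⟩, u) ?_ ?_
        · rwa [SimpleGraph.mem_edgeFinset, SimpleGraph.mem_edgeSet]
        · exact (hmemhyp _ v).2 (Or.inl ⟨⟨v, hv⟩, by simp [Thm42Aux.ends_mk], rfl⟩)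
      · exact key e (SimpleGraph.mem_edgeFinset.2 he) ((hmemhyp e v).2 (Or.inr ⟨j, hj⟩))
    · -- WCondI
      intro p hp
      have hsub : ((Finset.univ.filter fun l => l < p).biUnion
            (fun l => hyp (L.get l))) ∩ hyp (L.get p)
          ⊆ (Thm42Aux.vset (L.take (p : ℕ)).toFinset ∩
              Thm42Aux.ends (L.get p)).image Subtype.val := by
        intro v hv
        rw [Finset.mem_inter] at hv
        obtain ⟨l, hl, hvl⟩ := Finset.mem_biUnion.1 hv.1
        have hlp : l < p := (Finset.mem_filter.1 hl).2
        have hnee : L.get l ≠ L.get p := by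
          intro h
          have := List.nodup_iff_injective_get.1 hLnd h
          exact absurd (this ▸ hlp) (lt_irrefl p)
        have hx := hpair _ (hgetmem l) _ (hgetmem p) hnee (Finset.mem_inter.2 ⟨hvl, hv.2⟩)
        obtain ⟨w, hw, rfl⟩ := Finset.mem_image.1 hx
        rw [Finset.mem_inter] at hw
        refine Finset.mem_image.2 ⟨w, Finset.mem_inter.2 ⟨?_, hw.2⟩, rfl⟩
        refine Finset.mem_biUnion.2 ⟨L.get l, List.mem_toFinset.2 ?_, hw.1⟩
        have hlt : (l : ℕ) < (L.take (p : ℕ)).length := by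
          rw [List.length_take]
          exact lt_min hlp l.2
        have hgeq : (L.take (p : ℕ))[(l : ℕ)]'hlt = L.get l := by
          rw [List.getElem_take]
          rfl
        exact hgeq ▸ List.getElem_mem hlt
      have h1 := Finset.card_le_card hsub
      rw [Finset.card_image_of_injective _ Subtype.val_injective] at h1
      refine h1.trans ?_
      rw [Finset.inter_comm]
      exact hLgood (p : ℕ) p.2
    · -- decomposition
      have hsumE : ∀ f : Finset (Fin n) → ℝ,
          (∑ l : Fin k, f (hyp (L.get l))) = ∑ e ∈ E, f e := by
        intro f
        rw [hEimg, Finset.sum_image hinjOn, ← hLfin]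
        refine (Finset.sum_bij (fun (l : Fin k) _ => L.get l)
          (fun l _ => List.mem_toFinset.2 (L.get_mem l))
          (fun l _ l' _ h => List.nodup_iff_injective_get.1 hLnd h)
          ?_ (fun l _ => rfl))
        intro e he
        obtain ⟨l, hl⟩ := List.mem_iff_get.1 (List.mem_toFinset.1 he)
        exact ⟨l, Finset.mem_univ _, hl⟩
      intro x
      have hL1 : tmul (lapT m n E) x
          = (∑ i, (degT E i : ℝ) * x i ^ m)
            - ∑ e ∈ E, (1 / (Nat.factorial (m - 1) : ℝ)) *
                ∑ g ∈ Finset.univ.filter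
                  (fun g : Fin m → Fin n => Finset.image g Finset.univ = e),
                  ∏ j, x (g j) := by
        unfold tmul lapT adjT
        rw [Finset.sum_congr rfl fun (g : Fin m → Fin n) _ =>
          sub_mul (∑ i : Fin n, if g = Function.const (Fin m) i then (degT E i : ℝ) else 0)
            (if Finset.image g Finset.univ ∈ E then 1 / (Nat.factorial (m - 1) : ℝ) else 0)
            (∏ j, x (g j)), Finset.sum_sub_distrib]
        congr 1
        · rw [Thm42Aux.sum_const_tuple (fun i => (degT E i : ℝ)) (fun g => ∏ j, x (g j))]
          refine Finset.sum_congr rfl fun i _ => ?_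
          rw [show (∏ j : Fin m, x (Function.const (Fin m) i j)) = ∏ _j : Fin m, x i from rfl,
            Finset.prod_const, Finset.card_univ, Fintype.card_fin]
        · exact Thm42Aux.sum_adj_fiber E _ _
      have hR1 : ∀ l : Fin k,
          subTmul (hyp (L.get l))
            (fun g => (if ∃ i : ↥(hyp (L.get l)), g = Function.const (Fin m) i
                then (1:ℝ) else 0)
              - (if Finset.image (fun j => ((g j : Fin n))) Finset.univ = hyp (L.get l)
                  then 1 / (Nat.factorial (m - 1) : ℝ) else 0)) x
          = (∑ i ∈ hyp (L.get l), x i ^ m)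
            - (1 / (Nat.factorial (m - 1) : ℝ)) *
                ∑ g ∈ Finset.univ.filter
                  (fun g : Fin m → Fin n => Finset.image g Finset.univ = hyp (L.get l)),
                  ∏ j, x (g j) := by
        intro l
        unfold subTmul
        rw [Finset.sum_congr rfl fun (g : Fin m → ↥(hyp (L.get l))) _ =>
          sub_mul (if ∃ i : ↥(hyp (L.get l)), g = Function.const (Fin m) i
              then (1:ℝ) else 0)
            (if Finset.image (fun j => ((g j : Fin n))) Finset.univ = hyp (L.get l)
              then 1 / (Nat.factorial (m - 1) : ℝ) else 0)
            (∏ j, x (g j : Fin n)), Finset.sum_sub_distrib]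
        congr 1
        · rw [Thm42Aux.indicator_const_sum hm0
            (fun g : Fin m → ↥(hyp (L.get l)) => ∏ j, x (g j : Fin n))]
          rw [← Finset.sum_coe_sort (hyp (L.get l)) (fun i => x i ^ m)]
          refine Finset.sum_congr rfl fun i _ => ?_
          show (∏ _j : Fin m, x i) = x (i : Fin n) ^ m
          rw [Finset.prod_const, Finset.card_univ, Fintype.card_fin]
        · have e1 : ∀ g : Fin m → ↥(hyp (L.get l)),
              (if Finset.image (fun j => ((g j : Fin n))) Finset.univ = hyp (L.get l)
                  then 1 / (Nat.factorial (m - 1) : ℝ) else 0) * ∏ j, x (g j : Fin n)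
                = if Finset.image (fun j => ((g j : Fin n))) Finset.univ = hyp (L.get l)
                    then (1 / (Nat.factorial (m - 1) : ℝ)) * ∏ j, x (g j : Fin n) else 0 := by
            intro g
            rw [ite_mul, zero_mul]
          rw [Finset.sum_congr rfl fun g _ => e1 g, ← Finset.sum_filter, ← Finset.mul_sum,
            Thm42Aux.sum_fiber_reindex]
      rw [hL1, Finset.sum_congr rfl fun l _ => hR1 l, Finset.sum_sub_distrib]
      congr 1
      · -- degree part
        have hinner : ∀ l : Fin k, (∑ i ∈ hyp (L.get l), x i ^ m)
            = ∑ i : Fin n, if i ∈ hyp (L.get l) then x i ^ m else 0 := by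
          intro l
          rw [Finset.sum_ite_mem, Finset.univ_inter]
        rw [Finset.sum_congr rfl fun l _ => hinner l, Finset.sum_comm]
        refine Finset.sum_congr rfl fun i _ => ?_
        have : (∑ l : Fin k, if i ∈ hyp (L.get l) then x i ^ m else 0)
            = (∑ l : Fin k, if i ∈ hyp (L.get l) then (1:ℝ) else 0) * x i ^ m := by
          rw [Finset.sum_mul]
          exact Finset.sum_congr rfl fun l _ => by rw [ite_mul, one_mul, zero_mul]
        rw [this, hsumE (fun e => if i ∈ e then (1:ℝ) else 0)]
        congr 1
        rw [Finset.sum_boole]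
        unfold degT
        norm_num
      · exact (hsumE (fun e => (1 / (Nat.factorial (m - 1) : ℝ)) *
          ∑ g ∈ Finset.univ.filter
            (fun g : Fin m → Fin n => Finset.image g Finset.univ = e),
            ∏ j, x (g j))).symm
    · -- WCondIII
      intro l
      left
      have hcard : Fintype.card ↥(hyp (L.get l)) = m := by
        rw [Fintype.card_coe]
        exact hcardhyp _ (hgetmem l)
      set eqv : Fin m ≃ ↥(hyp (L.get l)) := (Fintype.equivFinOfCardEq hcard).symm with heqv
      refine ⟨⇑eqv, ?_, ?_⟩
      · intro h
        have h01 := eqv.injective (h ⟨0, by omega⟩ ⟨1, by omega⟩)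
        simp only [Fin.mk.injEq] at h01
        omega
      · intro g hg hgb
        have h1 : ¬ ∃ i : ↥(hyp (L.get l)), g = Function.const (Fin m) i := by
          rintro ⟨i, rfl⟩
          exact hg fun j j' => rfl
        have h2 : ¬ (Finset.image (fun j => ((g j : Fin n))) Finset.univ = hyp (L.get l)) := by
          intro himg
          have hinj' : Set.InjOn (fun j => ((g j : Fin n)))
              ↑(Finset.univ : Finset (Fin m)) := by
            rw [← Finset.card_image_iff, himg, hcardhyp _ (hgetmem l), Finset.card_univ,
              Fintype.card_fin]
          have hinj : Function.Injective g := by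
            intro a b hab
            exact hinj' (by simp) (by simp) (congrArg Subtype.val hab)
          have hbij : Function.Bijective g :=
            (Fintype.bijective_iff_injective_and_card g).2
              ⟨hinj, by rw [Fintype.card_fin, hcard]⟩
          refine hgb ((Equiv.ofBijective g hbij).trans eqv.symm) ?_
          funext j
          show g j = eqv (eqv.symm (g j))
          rw [Equiv.apply_symm_apply]
        show (if ∃ i : ↥(hyp (L.get l)), g = Function.const (Fin m) i then (1:ℝ) else 0)
          - (if Finset.image (fun j => ((g j : Fin n))) Finset.univ = hyp (L.get l)
              then 1 / (Nat.factorial (m - 1) : ℝ) else 0) = 0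
        rw [if_neg h1, if_neg h2, sub_zero]

end
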